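/- Assume in addition that K is algebraically closed, and let p ∈ K[X] be nonzero. Then the endomorphism p(M) : L → L is surjective, and dim_K ker(p(M)) equals the sum of the multiplicities of the nonzero roots of p (i.e., if p(X) = c X^{e_0} ∏_{i=1}^r (X − α_i)^{e_i} with c ≠ 0 and α_1,…,α_r distinct nonzero elements of K, then dim_K ker(p(M)) = Σ_{i=1}^r e_i). -/

import Mathlib

open Polynomial
open scoped Classical

noncomputable section

/-- The q-integer {n}_q. -/
def qInt (K : Type*) [Field K] (q : K) (n : ℤ) : K :=
  if q = 1 then (n : K) else (q ^ n - 1) / (q - 1)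

/-- The multiplication operator `M` on formal Laurent series `L = ℤ → K`:
`(M a)(n) = a(n-1)`. -/
def Mop (K : Type*) [Field K] : Module.End K (ℤ → K) where
  toFun a := fun n => a (n - 1)
  map_add' _ _ := rfl
  map_smul' _ _ := rfl

/-- The q-difference operator `D_q` on `L = ℤ → K`: `(D_q a)(n) = {n+1}_q · a(n+1)`. -/
def Dq (K : Type*) [Field K] (q : K) : Module.End K (ℤ → K) where
  toFun a := fun n => qInt K q (n + 1) * a (n + 1)
  map_add' x y := by funext n; simp [Pi.add_apply, mul_add]
  map_smul' c x := by funext n; simp [Pi.smul_apply, smul_eq_mul]; ring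

section Engine
variable {K V : Type*} [Field K] [AddCommGroup V] [Module K V]

/-- Predicate: f is surjective with finite-dimensional kernel of dimension d. -/
def GoodOp (K : Type*) {V : Type*} [Field K] [AddCommGroup V] [Module K V]
    (f : Module.End K V) (d : ℕ) : Prop :=
  Function.Surjective f ∧ FiniteDimensional K (LinearMap.ker f) ∧
    Module.finrank K (LinearMap.ker f) = d

lemma goodOp_one : GoodOp K (1 : Module.End K V) 0 := by
  refine ⟨fun x => ⟨x, rfl⟩, ?_, ?_⟩
  · rw [Module.End.one_eq_id, LinearMap.ker_id]; infer_instance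
  · rw [Module.End.one_eq_id, LinearMap.ker_id, finrank_bot]

lemma goodOp_mul {f g : Module.End K V} {d d' : ℕ}
    (hf : GoodOp K f d) (hg : GoodOp K g d') : GoodOp K (f * g) (d + d') := by
  obtain ⟨hfs, hfk, hfd⟩ := hf
  obtain ⟨hgs, hgk, hgd⟩ := hg
  have hcomp : f * g = f ∘ₗ g := Module.End.mul_eq_comp f g
  have hsurj : Function.Surjective (f * g) := by
    rw [hcomp]; exact hfs.comp hgs
  have hfin : FiniteDimensional K (LinearMap.ker (f * g)) := by
    rw [hcomp]
    exact Module.Finite.iff_fg.mpr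
      (Submodule.fg_ker_comp g f (Module.Finite.iff_fg.mp hgk) (Module.Finite.iff_fg.mp hfk) hgs)
  refine ⟨hsurj, hfin, ?_⟩
  -- the restricted map ker (f*g) → ker f, x ↦ g x
  have hmem : ∀ x : LinearMap.ker (f * g), g x.1 ∈ LinearMap.ker f := by
    rintro ⟨x, hx⟩
    simpa [LinearMap.mem_ker, Module.End.mul_apply] using hx
  set φ : (LinearMap.ker (f * g)) →ₗ[K] (LinearMap.ker f) :=
    LinearMap.codRestrict (LinearMap.ker f) (g ∘ₗ (LinearMap.ker (f * g)).subtype) hmem with hφ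
  have hφsurj : Function.Surjective φ := by
    rintro ⟨y, hy⟩
    obtain ⟨x, hx⟩ := hgs y
    have hxk : x ∈ LinearMap.ker (f * g) := by
      simp [LinearMap.mem_ker, Module.End.mul_apply, hx, LinearMap.mem_ker.mp hy]
    exact ⟨⟨x, hxk⟩, Subtype.ext (by exact hx)⟩
  have h1 : Module.finrank K (LinearMap.range φ) + Module.finrank K (LinearMap.ker φ)
      = Module.finrank K (LinearMap.ker (f * g)) := LinearMap.finrank_range_add_finrank_ker φ
  have h2 : Module.finrank K (LinearMap.range φ) = d := by
    rw [LinearMap.range_eq_top.mpr hφsurj, finrank_top, hfd]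
  have hle : LinearMap.ker g ≤ LinearMap.ker (f * g) := by
    intro x hx
    simp [LinearMap.mem_ker, Module.End.mul_apply, LinearMap.mem_ker.mp hx]
  have h3 : Module.finrank K (LinearMap.ker φ) = d' := by
    have : LinearMap.ker φ = Submodule.comap (LinearMap.ker (f * g)).subtype (LinearMap.ker g) := by
      ext x
      simp only [LinearMap.mem_ker, Submodule.mem_comap, Submodule.subtype_apply]
      exact ⟨fun h => by have := congrArg Subtype.val h; exact this, fun h => Subtype.ext h⟩
    rw [this, (Submodule.comapSubtypeEquivOfLe hle).finrank_eq, hgd]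
  omega

lemma goodOp_pow {f : Module.End K V} {d : ℕ} (hf : GoodOp K f d) (k : ℕ) :
    GoodOp K (f ^ k) (k * d) := by
  induction k with
  | zero => simpa using goodOp_one
  | succ n ih =>
      have := goodOp_mul ih hf
      rw [← pow_succ] at this
      simpa [Nat.succ_mul] using this

lemma goodOp_aeval_prod {ι : Type*} (f : Module.End K V) (s : Finset ι) (P : ι → K[X])
    (d : ι → ℕ) (h : ∀ i ∈ s, GoodOp K (Polynomial.aeval f (P i)) (d i)) :
    GoodOp K (Polynomial.aeval f (∏ i ∈ s, P i)) (∑ i ∈ s, d i) := by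
  classical
  induction s using Finset.induction_on with
  | empty => simpa using goodOp_one
  | insert a s' hx ih =>
      rw [Finset.prod_insert hx, Finset.sum_insert hx, map_mul]
      exact goodOp_mul (h a (Finset.mem_insert_self a s'))
        (ih fun i hi => h i (Finset.mem_insert_of_mem hi))

end Engine

section Ops
variable {K : Type*} [Field K]

/-- Recursion upwards for the preimage. -/
def solUp (α : K) (b : ℤ → K) : ℕ → K
  | 0 => 0
  | m + 1 => (solUp α b m - b ((m : ℤ) + 1)) * α⁻¹

/-- Recursion downwards for the preimage. -/
def solDown (α : K) (b : ℤ → K) : ℕ → K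
  | 0 => 0
  | m + 1 => α * solDown α b m + b (-(m : ℤ))

/-- The preimage of `b` under `M - α`. -/
def sol (α : K) (b : ℤ → K) : ℤ → K
  | Int.ofNat m => solUp α b m
  | Int.negSucc m => solDown α b (m + 1)

lemma sol_spec {α : K} (hα : α ≠ 0) (b : ℤ → K) (n : ℤ) :
    sol α b (n - 1) - α * sol α b n = b n := by
  cases n with
  | ofNat m =>
      cases m with
      | zero =>
          have h1 : (Int.ofNat 0) - 1 = Int.negSucc 0 := rfl
          rw [h1]
          show solDown α b 1 - α * solUp α b 0 = b 0
          simp [solDown, solUp]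
      | succ m =>
          have h1 : (Int.ofNat (m + 1)) - 1 = Int.ofNat m := by
            simp [Int.ofNat_eq_natCast]
          rw [h1]
          show solUp α b m - α * solUp α b (m + 1) = b (Int.ofNat (m + 1))
          have h2 : (Int.ofNat (m + 1)) = (m : ℤ) + 1 := by
            simp [Int.ofNat_eq_natCast]
          rw [h2]
          simp only [solUp]
          field_simp
          ring
  | negSucc m =>
      have h1 : (Int.negSucc m) - 1 = Int.negSucc (m + 1) := by
        rw [Int.negSucc_eq, Int.negSucc_eq]; push_cast; ring
      rw [h1]
      show solDown α b (m + 1 + 1) - α * solDown α b (m + 1) = b (Int.negSucc m)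
      have h2 : (Int.negSucc m) = -((m : ℤ) + 1) := Int.negSucc_eq m
      simp only [solDown]
      rw [h2]
      push_cast
      ring_nf

lemma goodOp_Mop : GoodOp K (Mop K) 0 := by
  have hker : LinearMap.ker (Mop K) = ⊥ := by
    ext a
    simp only [LinearMap.mem_ker, Submodule.mem_bot]
    constructor
    · intro h
      funext n
      have := congrFun h (n + 1)
      simpa [Mop] using this
    · rintro rfl; rfl
  refine ⟨?_, ?_, ?_⟩
  · intro b
    exact ⟨fun n => b (n + 1), by funext n; simp [Mop]⟩
  · rw [hker]; infer_instance
  · rw [hker, finrank_bot]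

lemma goodOp_algebraMap {c : K} (hc : c ≠ 0) :
    GoodOp K (algebraMap K (Module.End K (ℤ → K)) c) 0 := by
  have hker : LinearMap.ker (algebraMap K (Module.End K (ℤ → K)) c) = ⊥ := by
    ext a
    simp only [LinearMap.mem_ker, Submodule.mem_bot, Module.algebraMap_end_apply]
    exact ⟨fun h => (smul_eq_zero.mp h).resolve_left hc, fun h => by rw [h, smul_zero]⟩
  refine ⟨?_, ?_, ?_⟩
  · intro b
    refine ⟨c⁻¹ • b, ?_⟩
    rw [Module.algebraMap_end_apply, smul_smul, mul_inv_cancel₀ hc, one_smul]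
  · rw [hker]; infer_instance
  · rw [hker, finrank_bot]

lemma Tα_apply (α : K) (a : ℤ → K) (n : ℤ) :
    ((Mop K - algebraMap K (Module.End K (ℤ → K)) α) a) n = a (n - 1) - α * a n := by
  simp [Mop, Module.algebraMap_end_apply, LinearMap.sub_apply, Pi.sub_apply, Pi.smul_apply,
    smul_eq_mul]

lemma goodOp_Tα {α : K} (hα : α ≠ 0) :
    GoodOp K (Mop K - algebraMap K (Module.End K (ℤ → K)) α) 1 := by
  set T := Mop K - algebraMap K (Module.End K (ℤ → K)) α with hT
  set v : ℤ → K := fun n => α ^ (-n) with hv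
  have hv0 : v ≠ 0 := by
    intro h
    have := congrFun h 0
    simp [hv] at this
  have hker : LinearMap.ker T = Submodule.span K {v} := by
    apply le_antisymm
    · intro a ha
      have heq : ∀ n : ℤ, a (n - 1) - α * a n = 0 := by
        intro n
        have := congrFun (LinearMap.mem_ker.mp ha) n
        rwa [Tα_apply] at this
      have key : ∀ n : ℤ, a n = a 0 * α ^ (-n) := by
        intro n
        induction n using Int.induction_on with
        | zero => simp
        | succ i ih =>
            have h1 := heq ((i : ℤ) + 1)
            rw [add_sub_cancel_right, sub_eq_zero] at h1
            have h3 : a ((i : ℤ) + 1) = α⁻¹ * a (i : ℤ) := by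
              rw [h1, inv_mul_cancel_left₀ hα]
            rw [h3, ih, show -((i : ℤ) + 1) = -(i : ℤ) + (-1) by ring, zpow_add₀ hα,
              zpow_neg_one]
            ring
        | pred i ih =>
            have h1 := heq (-(i : ℤ))
            rw [sub_eq_zero, ih] at h1
            rw [h1, show (-(-(i : ℤ) - 1)) = (- -(i : ℤ)) + 1 by ring, zpow_add₀ hα, zpow_one]
            ring
      rw [Submodule.mem_span_singleton]
      refine ⟨a 0, ?_⟩
      funext n
      simp only [Pi.smul_apply, smul_eq_mul, hv]
      exact (key n).symm
    · rw [Submodule.span_le, Set.singleton_subset_iff]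
      show v ∈ LinearMap.ker T
      rw [LinearMap.mem_ker]
      funext n
      rw [Tα_apply]
      show α ^ (-(n - 1)) - α * α ^ (-n) = 0
      rw [show -(n - 1) = 1 + -n by ring, zpow_add₀ hα, zpow_one, sub_self]
  refine ⟨?_, ?_, ?_⟩
  · intro b
    refine ⟨sol α b, ?_⟩
    funext n
    rw [Tα_apply]
    exact sol_spec hα b n
  · rw [hker]
    exact FiniteDimensional.span_of_finite K (Set.finite_singleton v)
  · rw [hker, finrank_span_singleton hv0]

end Ops

/-- for `K` algebraically closed and `p ≠ 0` with factorization
`p(X) = c X^{e_0} ∏_{i=1}^r (X − α_i)^{e_i}` (`c ≠ 0`, the `α_i` distinct and nonzero),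
`p(M)` is surjective and `dim_K ker p(M) = Σ_{i=1}^r e_i`. -/
theorem surjective_and_dim_ker_pM (K : Type*) [Field K] [IsAlgClosed K] (q : K) (hq : q ≠ 0)
    (hqi : ∀ n : ℤ, n ≠ 0 → qInt K q n ≠ 0)
    (c : K) (hc : c ≠ 0) (e0 : ℕ) (r : ℕ)
    (α : Fin r → K) (hα0 : ∀ i, α i ≠ 0) (hinj : Function.Injective α)
    (e : Fin r → ℕ) (he : ∀ i, 1 ≤ e i)
    (p : K[X]) (hp : p = C c * X ^ e0 * ∏ i, (X - C (α i)) ^ e i) :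
    Function.Surjective ⇑(aeval (Mop K) p) ∧
    FiniteDimensional K (LinearMap.ker (aeval (Mop K) p)) ∧
    Module.finrank K (LinearMap.ker (aeval (Mop K) p)) = ∑ i, e i := by
  subst hp
  rw [map_mul, map_mul, map_pow, aeval_X, aeval_C]
  have h1 : GoodOp K (algebraMap K (Module.End K (ℤ → K)) c) 0 := goodOp_algebraMap hc
  have h2 : GoodOp K ((Mop K) ^ e0) 0 := by
    simpa using goodOp_pow goodOp_Mop e0
  have h3 : GoodOp K (aeval (Mop K) (∏ i, (X - C (α i)) ^ e i)) (∑ i, e i) := by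
    apply goodOp_aeval_prod
    intro i _
    rw [map_pow, map_sub, aeval_X, aeval_C]
    simpa using goodOp_pow (goodOp_Tα (hα0 i)) (e i)
  have total := goodOp_mul (goodOp_mul h1 h2) h3
  obtain ⟨hs, hf, hd⟩ := total
  exact ⟨hs, hf, by simpa using hd⟩
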